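/- (Theorem B) Let E be a compact metric space, Ω = E^ℕ, σ the left shift, p a fully supported Borel probability measure on E, f ∈ C(Ω), L_f the Ruelle operator, λ_f = exp(P(f)), and ν ∈ G*(f). Let μ be a σ-invariant Borel probability measure on Ω with μ absolutely continuous with respect to ν, and let h = dμ/dν be the Radon–Nikodym derivative. Then h is an eigenfunction of the extension of L_f to L¹(Ω, ν) associated to λ_f: for ν-a.e. x ∈ Ω, ∫_E exp(f(a·x)) h(a·x) dp(a) = λ_f · h(x). -/

import Mathlib

open MeasureTheory Filter Topology
open scoped ENNReal NNReal

noncomputable section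

/-- The sequence `(a, x₁, x₂, …)` obtained by prepending `a` to `x`. -/
def cons {E : Type*} (a : E) (x : ℕ → E) : ℕ → E := fun n => Nat.casesOn n a x

/-- The left shift `σ(x₁, x₂, x₃, …) = (x₂, x₃, …)`. -/
def shift {E : Type*} (x : ℕ → E) : ℕ → E := fun n => x (n + 1)

lemma shift_cons {E : Type*} (a : E) (x : ℕ → E) : shift (cons a x) = x := rfl

lemma continuous_cons {E : Type*} [TopologicalSpace E] :
    Continuous (fun q : E × (ℕ → E) => cons q.1 q.2) := by
  apply continuous_pi
  intro n
  cases n with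
  | zero => exact continuous_fst
  | succ k => exact (continuous_apply k).comp continuous_snd

lemma integrable_of_continuous {X : Type*} [TopologicalSpace X] [CompactSpace X]
    [MeasurableSpace X] [OpensMeasurableSpace X] (m : Measure X) [IsFiniteMeasure m]
    (g : C(X, ℝ)) : Integrable g m := by
  refine Integrable.mono' (integrable_const ‖g‖) g.continuous.aestronglyMeasurable ?_
  exact ae_of_all _ fun x => g.norm_coe_le_norm x

/-- **Theorem B.** Let `ν ∈ G*(f)` and let `μ` be a shift-invariant Borel
probability measure on `Ω` with `μ ≪ ν`.  Then the Radon–Nikodym derivative `h = dμ/dν` is an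
eigenfunction of the `L¹(Ω, ν)`-extension of the Ruelle operator associated to
`λ_f = exp(P(f))`: for `ν`-a.e. `x`, `∫_E exp(f(a·x)) h(a·x) dp(a) = λ_f · h(x)`. -/
theorem radon_nikodym_eigenfunction
    {E : Type*} [MetricSpace E] [CompactSpace E] [MeasurableSpace E] [BorelSpace E]
    (p : Measure E) [IsProbabilityMeasure p]
    (hp : ∀ U : Set E, IsOpen U → U.Nonempty → 0 < p U)
    (f : C(ℕ → E, ℝ))
    (T : C(ℕ → E, ℝ) →L[ℝ] C(ℕ → E, ℝ))
    (hT : ∀ (φ : C(ℕ → E, ℝ)) (x : ℕ → E),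
      T φ x = ∫ a, Real.exp (f (cons a x)) * φ (cons a x) ∂p)
    (P : ℝ)
    (hP : TendstoUniformly (fun (n : ℕ) (x : ℕ → E) => Real.log ((T ^ n) 1 x) / n)
      (fun _ => P) atTop)
    (ν : Measure (ℕ → E)) [IsProbabilityMeasure ν]
    (hν : ∀ φ : C(ℕ → E, ℝ), ∫ x, T φ x ∂ν = Real.exp P * ∫ x, φ x ∂ν)
    (μ : Measure (ℕ → E)) [IsProbabilityMeasure μ]
    (hinv : ∀ A : Set (ℕ → E), MeasurableSet A → μ (shift ⁻¹' A) = μ A)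
    (hac : μ ≪ ν) :
    ∀ᵐ x ∂ν,
      ∫ a, Real.exp (f (cons a x)) * (μ.rnDeriv ν (cons a x)).toReal ∂p =
        Real.exp P * (μ.rnDeriv ν x).toReal := by
  classical
  set Ω := ℕ → E
  set Cn : E × Ω → Ω := fun q => cons q.1 q.2 with hCn
  have hCncont : Continuous Cn := continuous_cons
  have hCnmeas : Measurable Cn := hCncont.measurable
  set w : E × Ω → ℝ≥0∞ := fun q => ENNReal.ofReal (Real.exp (f (Cn q))) with hw
  have hwmeas : Measurable w := by
    exact ENNReal.measurable_ofReal.comp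
      ((Real.continuous_exp.comp (f.continuous.comp hCncont)).measurable)
  have hwne : ∀ q, w q ≠ 0 := fun q =>
    (ENNReal.ofReal_pos.mpr (Real.exp_pos _)).ne'
  have hwlt : ∀ q, w q ≠ ∞ := fun q => ENNReal.ofReal_ne_top
  set c : ℝ≥0∞ := ENNReal.ofReal (Real.exp P) with hc
  have hcne : c ≠ 0 := (ENNReal.ofReal_pos.mpr (Real.exp_pos _)).ne'
  have hcnt : c ≠ ∞ := ENNReal.ofReal_ne_top
  set m0 : Measure (E × Ω) := (p.prod ν).withDensity w with hm0
  have hm0fin : IsFiniteMeasure m0 := by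
    refine isFiniteMeasure_withDensity (ne_of_lt ?_)
    calc ∫⁻ q, w q ∂(p.prod ν) ≤ ∫⁻ _, ENNReal.ofReal (Real.exp ‖f‖) ∂(p.prod ν) := by
          refine lintegral_mono fun q => ?_
          exact ENNReal.ofReal_le_ofReal (Real.exp_le_exp.mpr
            (le_trans (le_abs_self _) (f.norm_coe_le_norm _)))
      _ < ∞ := by simp [lt_top_iff_ne_top]
  set κ : Measure Ω := m0.map Cn with hκdef
  haveI : IsFiniteMeasure κ := by
    constructor
    rw [hκdef, Measure.map_apply hCnmeas MeasurableSet.univ]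
    exact measure_lt_top m0 _
  -- integral identity for continuous functions
  have hint : ∀ φ : C(Ω, ℝ),
      ∫ q, Real.exp (f (Cn q)) * φ (Cn q) ∂(p.prod ν) = Real.exp P * ∫ x, φ x ∂ν := by
    intro φ
    have hg : Continuous fun q : E × Ω => Real.exp (f (Cn q)) * φ (Cn q) :=
      (Real.continuous_exp.comp (f.continuous.comp hCncont)).mul (φ.continuous.comp hCncont)
    have hgi : Integrable (fun q : E × Ω => Real.exp (f (Cn q)) * φ (Cn q)) (p.prod ν) :=
      integrable_of_continuous _ ⟨_, hg⟩
    have hswap := integral_integral_swap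
      (f := fun a x => Real.exp (f (cons a x)) * φ (cons a x)) (μ := p) (ν := ν) hgi
    calc ∫ q, Real.exp (f (Cn q)) * φ (Cn q) ∂(p.prod ν)
        = ∫ a, ∫ x, Real.exp (f (cons a x)) * φ (cons a x) ∂ν ∂p := integral_prod _ hgi
      _ = ∫ x, ∫ a, Real.exp (f (cons a x)) * φ (cons a x) ∂p ∂ν := hswap
      _ = ∫ x, T φ x ∂ν := by
          refine integral_congr_ae (ae_of_all _ fun x => ?_)
          rw [hT]
      _ = Real.exp P * ∫ x, φ x ∂ν := hν φ
  -- κ = c • ν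
  have hκ : κ = c • ν := by
    refine ext_of_forall_lintegral_eq_of_IsFiniteMeasure fun f₀ => ?_
    set φ : C(Ω, ℝ) := ⟨fun x => (f₀ x : ℝ), by continuity⟩ with hφ
    have hφnn : 0 ≤ᵐ[ν] fun x => φ x := ae_of_all _ fun x => (f₀ x).coe_nonneg
    have hf₀meas : Measurable fun x : Ω => (f₀ x : ℝ≥0∞) :=
      measurable_coe_nnreal_ennreal.comp f₀.continuous.measurable
    have lhs : ∫⁻ x, (f₀ x : ℝ≥0∞) ∂κ
        = ENNReal.ofReal (Real.exp P * ∫ x, φ x ∂ν) := by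
      have hg : Measurable fun q : E × Ω => (f₀ (Cn q) : ℝ≥0∞) := hf₀meas.comp hCnmeas
      rw [hκdef, lintegral_map hf₀meas hCnmeas, hm0,
        lintegral_withDensity_eq_lintegral_mul _ hwmeas hg]
      have : ∀ q : E × Ω, (w * fun q => (f₀ (Cn q) : ℝ≥0∞)) q
          = ENNReal.ofReal (Real.exp (f (Cn q)) * φ (Cn q)) := by
        intro q
        simp only [Pi.mul_apply, hw]
        rw [ENNReal.ofReal_mul (Real.exp_nonneg _)]
        congr 1
        simp [hφ]
      rw [lintegral_congr this, ← ofReal_integral_eq_lintegral_ofReal, hint φ]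
      · exact integrable_of_continuous _
          ⟨_, (Real.continuous_exp.comp (f.continuous.comp hCncont)).mul
            (φ.continuous.comp hCncont)⟩
      · exact ae_of_all _ fun q => mul_nonneg (Real.exp_nonneg _) (f₀ (Cn q)).coe_nonneg
    have rhs : ∫⁻ x, (f₀ x : ℝ≥0∞) ∂(c • ν)
        = ENNReal.ofReal (Real.exp P * ∫ x, φ x ∂ν) := by
      rw [lintegral_smul_measure]
      have : ∫⁻ x, (f₀ x : ℝ≥0∞) ∂ν = ENNReal.ofReal (∫ x, φ x ∂ν) := by
        have : ∀ x : Ω, (f₀ x : ℝ≥0∞) = ENNReal.ofReal (φ x) := by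
          intro x; simp [hφ]
        rw [lintegral_congr this, ← ofReal_integral_eq_lintegral_ofReal]
        · exact integrable_of_continuous _ φ
        · exact hφnn
      rw [this, hc, smul_eq_mul, ← ENNReal.ofReal_mul (Real.exp_nonneg _)]
    rw [lhs, rhs]
  -- the key lintegral identity
  have key : ∀ ψ : Ω → ℝ≥0∞, Measurable ψ →
      c * ∫⁻ x, ψ x ∂ν = ∫⁻ x, ∫⁻ a, w (a, x) * ψ (cons a x) ∂p ∂ν := by
    intro ψ hψ
    have h1 : ∫⁻ x, ψ x ∂κ = c * ∫⁻ x, ψ x ∂ν := by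
      rw [hκ, lintegral_smul_measure, smul_eq_mul]
    have hF : Measurable fun q : E × Ω => w q * ψ (Cn q) :=
      hwmeas.mul (hψ.comp hCnmeas)
    have h2 : ∫⁻ x, ψ x ∂κ = ∫⁻ q, w q * ψ (Cn q) ∂(p.prod ν) := by
      have hg : Measurable fun q : E × Ω => ψ (Cn q) := hψ.comp hCnmeas
      rw [hκdef, lintegral_map hψ hCnmeas, hm0,
        lintegral_withDensity_eq_lintegral_mul _ hwmeas hg]
      rfl
    have h3 : ∫⁻ q, w q * ψ (Cn q) ∂(p.prod ν)
        = ∫⁻ a, ∫⁻ x, w (a, x) * ψ (cons a x) ∂ν ∂p :=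
      lintegral_prod _ hF.aemeasurable
    have h4 : ∫⁻ a, ∫⁻ x, w (a, x) * ψ (cons a x) ∂ν ∂p
        = ∫⁻ x, ∫⁻ a, w (a, x) * ψ (cons a x) ∂p ∂ν :=
      lintegral_lintegral_swap hF.aemeasurable
    rw [← h1, h2, h3, h4]
  -- Radon-Nikodym setup
  set H : Ω → ℝ≥0∞ := μ.rnDeriv ν with hH
  have hHmeas : Measurable H := Measure.measurable_rnDeriv μ ν
  have hμν : ν.withDensity H = μ :=
    @Measure.withDensity_rnDeriv_eq _ _ μ ν (Measure.haveLebesgueDecomposition_of_sigmaFinite μ ν) hac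
  have hμA : ∀ A : Set Ω, MeasurableSet A → μ A = ∫⁻ x in A, H x ∂ν := by
    intro A hA
    rw [← hμν, withDensity_apply _ hA]
  set G : Ω → ℝ≥0∞ := fun x => ∫⁻ a, w (a, x) * H (cons a x) ∂p with hG
  have hFmeas : Measurable fun q : E × Ω => w q * H (Cn q) :=
    hwmeas.mul (hHmeas.comp hCnmeas)
  have hGmeas : Measurable G := Measurable.lintegral_prod_left' hFmeas
  -- c * H = G a.e.
  have hmain : (fun x => c * H x) =ᵐ[ν] G := by
    refine ae_eq_of_forall_setLIntegral_eq_of_sigmaFinite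
      (hHmeas.const_mul c) hGmeas fun A hA _ => ?_
    set ψ : Ω → ℝ≥0∞ := (shift ⁻¹' A).indicator H with hψdef
    have hshiftmeas : Measurable (shift : Ω → Ω) := by
      exact (continuous_pi fun n => continuous_apply (n + 1)).measurable
    have hApre : MeasurableSet (shift ⁻¹' A) := hshiftmeas hA
    have hψmeas : Measurable ψ := hHmeas.indicator hApre
    have lhs : ∫⁻ x in A, c * H x ∂ν = c * ∫⁻ x, ψ x ∂ν := by
      rw [lintegral_const_mul c hHmeas]
      congr 1
      rw [hψdef, lintegral_indicator hApre, ← hμA _ hApre, hinv A hA, hμA A hA]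
    have inner : ∀ x, ∫⁻ a, w (a, x) * ψ (cons a x) ∂p = A.indicator G x := by
      intro x
      by_cases hx : x ∈ A
      · have : ∀ a, ψ (cons a x) = H (cons a x) := by
          intro a
          rw [hψdef, Set.indicator_of_mem]
          simpa [Set.mem_preimage, shift_cons] using hx
        simp only [this, Set.indicator_of_mem hx, hG]
      · have : ∀ a, ψ (cons a x) = 0 := by
          intro a
          rw [hψdef, Set.indicator_of_notMem]
          simpa [Set.mem_preimage, shift_cons] using hx
        simp [this, Set.indicator_of_notMem hx]
    rw [lhs, key ψ hψmeas]
    calc ∫⁻ x, ∫⁻ a, w (a, x) * ψ (cons a x) ∂p ∂ν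
        = ∫⁻ x, A.indicator G x ∂ν := lintegral_congr inner
      _ = ∫⁻ x in A, G x ∂ν := lintegral_indicator hA _
  -- a.e. finiteness of H along fibers
  have hNset : MeasurableSet {y : Ω | H y = ∞} := hHmeas (measurableSet_singleton ∞)
  have hνN : ν {y : Ω | H y = ∞} = 0 := by
    have := Measure.rnDeriv_lt_top μ ν
    rw [← hH] at this
    simpa [ae_iff, lt_top_iff_ne_top] using this
  have hκN : κ {y : Ω | H y = ∞} = 0 := by
    rw [hκ]
    simp [hνN]
  have hprodN : (p.prod ν) (Cn ⁻¹' {y : Ω | H y = ∞}) = 0 := by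
    rw [hκdef, Measure.map_apply hCnmeas hNset] at hκN
    have hpre : MeasurableSet (Cn ⁻¹' {y : Ω | H y = ∞}) := hCnmeas hNset
    rw [hm0, withDensity_apply _ hpre, setLIntegral_eq_zero_iff hpre hwmeas] at hκN
    have h2 : ∀ᵐ q ∂(p.prod ν), q ∉ Cn ⁻¹' {y : Ω | H y = ∞} := by
      filter_upwards [hκN] with q hq
      intro hmem
      exact hwne q (hq hmem)
    rw [ae_iff] at h2
    simpa using h2
  have hfiber : ∀ᵐ x ∂ν, ∀ᵐ a ∂p, H (cons a x) ≠ ∞ := by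
    have hswapmeas : Measurable fun q : Ω × E => cons q.2 q.1 :=
      hCnmeas.comp measurable_swap
    have hpre2 : MeasurableSet ((fun q : Ω × E => cons q.2 q.1) ⁻¹' {y : Ω | H y = ∞}) :=
      hswapmeas hNset
    have hS : (ν.prod p) ((fun q : Ω × E => cons q.2 q.1) ⁻¹' {y : Ω | H y = ∞}) = 0 := by
      rw [← Measure.prod_swap, Measure.map_apply measurable_swap hpre2]
      convert hprodN using 2
      rfl
    have hae : ∀ᵐ q ∂(ν.prod p), H (cons q.2 q.1) ≠ ∞ := by
      rw [ae_iff]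
      convert hS using 2
      ext q
      simp
      exact Iff.rfl
    exact Measure.ae_ae_of_ae_prod hae
  -- conclusion
  filter_upwards [hmain.symm, Measure.rnDeriv_lt_top μ ν, hfiber] with x h1 h2 h3
  have hptwise : ∀ a, Real.exp (f (cons a x)) * (H (cons a x)).toReal
      = ((w (a, x)) * H (cons a x)).toReal := by
    intro a
    rw [ENNReal.toReal_mul]
    congr 1
    rw [hw]
    exact (ENNReal.toReal_ofReal (Real.exp_nonneg _)).symm
  have hameas : AEMeasurable (fun a => w (a, x) * H (cons a x)) p := by
    exact (hFmeas.comp (measurable_id.prodMk measurable_const)).aemeasurable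
  have hafin : ∀ᵐ a ∂p, w (a, x) * H (cons a x) < ∞ := by
    filter_upwards [h3] with a ha
    exact ENNReal.mul_lt_top (lt_top_iff_ne_top.mpr (hwlt _)) (lt_top_iff_ne_top.mpr ha)
  calc ∫ a, Real.exp (f (cons a x)) * (H (cons a x)).toReal ∂p
      = ∫ a, ((w (a, x)) * H (cons a x)).toReal ∂p := by simp_rw [hptwise]
    _ = (∫⁻ a, w (a, x) * H (cons a x) ∂p).toReal := integral_toReal hameas hafin
    _ = (G x).toReal := rfl
    _ = (c * H x).toReal := by rw [h1]
    _ = Real.exp P * (H x).toReal := by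
        rw [ENNReal.toReal_mul, hc, ENNReal.toReal_ofReal (Real.exp_nonneg _)]
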